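/- Let g(x, δ) = (f(x), (∇_x f(x)) δ) be the augmented vector field and let C̃(x, δ) = ∇_x C(x)^T δ. Applying the exact-gradient adjoint theorem (conservation of the pairing for the symplectic partitioned Runge–Kutta pair) to the augmented system with final conditions ξ_N = (H_x C(x_N(θ))) δ_N and λ_N = ∇_x C(x_N(θ)) yields simultaneously ξ_0 = (H_θ C(x_N(θ))) γ and λ_0 = ∇_θ C(x_N(θ)), where δ_0 = γ. -/

import Mathlib

open Matrix

private lemma sum_dot {s d : ℕ} (u : Fin s → Fin d → ℝ) (w : Fin d → ℝ) :
    (∑ i, u i) ⬝ᵥ w = ∑ i, u i ⬝ᵥ w := by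
  simp [dotProduct, Finset.sum_mul, Finset.sum_apply]
  exact Finset.sum_comm

private lemma dot_sum {s d : ℕ} (w : Fin d → ℝ) (u : Fin s → Fin d → ℝ) :
    w ⬝ᵥ (∑ i, u i) = ∑ i, w ⬝ᵥ u i := by
  simp [dotProduct, Finset.mul_sum, Finset.sum_apply]
  exact Finset.sum_comm

private lemma rk_pair {d s : ℕ} {h : ℝ} {a A : Fin s → Fin s → ℝ} {b : Fin s → ℝ}
    (hcond : ∀ i j, b i * b j = b i * a i j + b j * A j i)
    (y0 y1 z0 z1 : Fin d → ℝ) (Ys Zs dY dZ : Fin s → Fin d → ℝ)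
    (hYs : ∀ i, Ys i = y0 + h • ∑ j, a i j • dY j)
    (hy1 : y1 = y0 + h • ∑ i, b i • dY i)
    (hZs : ∀ i, Zs i = z0 + h • ∑ j, A i j • dZ j)
    (hz1 : z1 = z0 + h • ∑ i, b i • dZ i) :
    z1 ⬝ᵥ y1 = z0 ⬝ᵥ y0 + h * ∑ i, b i * (dZ i ⬝ᵥ Ys i + Zs i ⬝ᵥ dY i) := by
  subst hy1 hz1
  simp only [hYs, hZs, dotProduct_add, add_dotProduct, dotProduct_smul, smul_dotProduct,
    smul_eq_mul, sum_dot, dot_sum, Finset.mul_sum, Finset.sum_add_distrib,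
    Finset.smul_sum]
  have key : ∀ x i : Fin s, h * (b x * (h * (b i * dZ i ⬝ᵥ dY x)))
      = h * (b i * (h * (a i x * dZ i ⬝ᵥ dY x))) + h * (b x * (h * (A x i * dZ i ⬝ᵥ dY x))) := by
    intro x i
    linear_combination h * h * (dZ i ⬝ᵥ dY x) * hcond i x
  have e2 : ∑ x : Fin s, ∑ i : Fin s, h * (b i * (h * (a i x * dZ i ⬝ᵥ dY x)))
      = ∑ x : Fin s, ∑ i : Fin s, h * (b x * (h * (a x i * dZ x ⬝ᵥ dY i))) :=
    by exact Finset.sum_comm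
  have e1 : ∑ x : Fin s, ∑ i : Fin s, h * (b x * (h * (b i * dZ i ⬝ᵥ dY x)))
      = (∑ x : Fin s, ∑ i : Fin s, h * (b x * (h * (a x i * dZ x ⬝ᵥ dY i))))
        + ∑ x : Fin s, ∑ i : Fin s, h * (b x * (h * (A x i * dZ i ⬝ᵥ dY x))) := by
    rw [← e2, ← Finset.sum_add_distrib]
    refine Finset.sum_congr rfl fun x _ => ?_
    rw [← Finset.sum_add_distrib]
    exact Finset.sum_congr rfl fun i _ => key x i
  simp only [mul_add, Finset.mul_sum, Finset.sum_add_distrib]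
  rw [e1]
  ring

/-- Exact Hessian-vector multiplication (Theorem 2): applying the adjoint
Runge–Kutta method with coefficients `A_{ij} = b_j - (b_j/b_i) a_{ji}`,
`B_i = b_i` to the coupled adjoint of the augmented system
`g(x,δ) = (f(x), (∇f(x))δ)`, with final conditions
`ξ_N = (H_x C(x_N(θ))) δ_N` and `λ_N = ∇_x C(x_N(θ))`, yields simultaneously
`ξ_0 = (H_θ C(x_N(θ))) γ` and `λ_0 = ∇_θ C(x_N(θ))`, where `δ_0 = γ`. -/
theorem exact_hessian_vector_multiplication
    (d s N : ℕ) (h : ℝ)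
    (a : Fin s → Fin s → ℝ) (b : Fin s → ℝ) (hb : ∀ i, b i ≠ 0)
    (A : Fin s → Fin s → ℝ)
    (hA : ∀ i j, A i j = b j - (b j / b i) * a j i)
    (f : (Fin d → ℝ) → (Fin d → ℝ)) (hf : ContDiff ℝ 2 f)
    (C : (Fin d → ℝ) → ℝ) (hC : ContDiff ℝ 2 C)
    (Jf : (Fin d → ℝ) → Matrix (Fin d) (Fin d) ℝ)
    (hJf : ∀ (p v : Fin d → ℝ), fderiv ℝ f p v = (Jf p).mulVec v)
    (K : (Fin d → ℝ) → (Fin d → ℝ) → Matrix (Fin d) (Fin d) ℝ)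
    (hK : ∀ (p δv v : Fin d → ℝ),
      fderiv ℝ (fun q => (Jf q).mulVec δv) p v = (K p δv).mulVec v)
    (θ γ : Fin d → ℝ)
    -- the numerical solution x_n(θ') of the original system with its stages
    (X : (Fin d → ℝ) → ℕ → (Fin d → ℝ))
    (XS : (Fin d → ℝ) → ℕ → Fin s → (Fin d → ℝ))
    (hX0 : ∀ θ' : Fin d → ℝ, X θ' 0 = θ')
    (hXS : ∀ (θ' : Fin d → ℝ) (n : ℕ) (i : Fin s),
      XS θ' n i = X θ' n + h • ∑ j, a i j • f (XS θ' n j))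
    (hXstep : ∀ (θ' : Fin d → ℝ) (n : ℕ),
      X θ' (n + 1) = X θ' n + h • ∑ i, b i • f (XS θ' n i))
    -- the numerical solution δ_n(θ',γ') of the variational system
    (Dl : (Fin d → ℝ) → (Fin d → ℝ) → ℕ → (Fin d → ℝ))
    (DS : (Fin d → ℝ) → (Fin d → ℝ) → ℕ → Fin s → (Fin d → ℝ))
    (hD0 : ∀ θ' γ' : Fin d → ℝ, Dl θ' γ' 0 = γ')
    (hDS : ∀ (θ' γ' : Fin d → ℝ) (n : ℕ) (i : Fin s),
      DS θ' γ' n i = Dl θ' γ' n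
        + h • ∑ j, a i j • (Jf (XS θ' n j)).mulVec (DS θ' γ' n j))
    (hDstep : ∀ (θ' γ' : Fin d → ℝ) (n : ℕ),
      Dl θ' γ' (n + 1) = Dl θ' γ' n
        + h • ∑ i, b i • (Jf (XS θ' n i)).mulVec (DS θ' γ' n i))
    -- regularity of the numerical flow and its stages in θ
    (hXsm : ∀ n : ℕ, ContDiff ℝ 2 (fun θ' => X θ' n))
    (hXSsm : ∀ (n : ℕ) (i : Fin s), ContDiff ℝ 2 (fun θ' => XS θ' n i))
    (hDsm : ∀ n : ℕ, ContDiff ℝ 1 (fun θ' => Dl θ' γ n))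
    (hDSsm : ∀ (n : ℕ) (i : Fin s), ContDiff ℝ 1 (fun θ' => DS θ' γ n i))
    -- δ is the derivative of the numerical flow with respect to θ
    (hvar : ∀ (θ' γ' : Fin d → ℝ) (n : ℕ),
      fderiv ℝ (fun p => X p n) θ' γ' = Dl θ' γ' n)
    (hvarS : ∀ (θ' γ' : Fin d → ℝ) (n : ℕ) (i : Fin s),
      fderiv ℝ (fun p => XS p n i) θ' γ' = DS θ' γ' n i)
    -- the adjoint numerical solutions λ_n, ξ_n with their stages,
    -- computed by the Runge--Kutta method with coefficients (A_{ij}, B_i = b_i)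
    (lam ξ : ℕ → (Fin d → ℝ))
    (LS ΞS : ℕ → Fin s → (Fin d → ℝ))
    (hLS : ∀ (n : ℕ) (i : Fin s),
      LS n i = lam n + h • ∑ j, A i j • (-((Jf (XS θ n j))ᵀ.mulVec (LS n j))))
    (hlamstep : ∀ n : ℕ,
      lam (n + 1) = lam n + h • ∑ i, b i • (-((Jf (XS θ n i))ᵀ.mulVec (LS n i))))
    (hΞS : ∀ (n : ℕ) (i : Fin s),
      ΞS n i = ξ n + h • ∑ j, A i j •
        (-((Jf (XS θ n j))ᵀ.mulVec (ΞS n j)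
            + (K (XS θ n j) (DS θ γ n j))ᵀ.mulVec (LS n j))))
    (hξstep : ∀ n : ℕ,
      ξ (n + 1) = ξ n + h • ∑ i, b i •
        (-((Jf (XS θ n i))ᵀ.mulVec (ΞS n i)
            + (K (XS θ n i) (DS θ γ n i))ᵀ.mulVec (LS n i))))
    -- final conditions: λ_N = ∇C(x_N(θ)), ξ_N = (H_x C(x_N(θ))) δ_N
    (gC : Fin d → ℝ)
    (hgC : ∀ v : Fin d → ℝ, fderiv ℝ C (X θ N) v = gC ⬝ᵥ v)
    (HCx : Matrix (Fin d) (Fin d) ℝ)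
    (hHCx : ∀ v w : Fin d → ℝ,
      fderiv ℝ (fun q => fderiv ℝ C q w) (X θ N) v = v ⬝ᵥ HCx.mulVec w)
    (hlamN : lam N = gC)
    (hξN : ξ N = HCx.mulVec (Dl θ γ N))
    -- the Hessian of the composed map θ' ↦ C(x_N(θ'))
    (Hθ : Matrix (Fin d) (Fin d) ℝ)
    (hHθ : ∀ v w : Fin d → ℝ,
      fderiv ℝ (fun q => fderiv ℝ (fun p => C (X p N)) q w) θ v
        = v ⬝ᵥ Hθ.mulVec w) :
    ξ 0 = Hθ.mulVec γ ∧
      (∀ v : Fin d → ℝ, fderiv ℝ (fun θ' => C (X θ' N)) θ v = lam 0 ⬝ᵥ v) := by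
  classical
  -- basic differentiability facts
  have hfd : ContDiff ℝ 1 (fderiv ℝ f) := hf.fderiv_right (by norm_num)
  have hCd : ContDiff ℝ 1 (fderiv ℝ C) := hC.fderiv_right (by norm_num)
  have hXSd : ∀ (n : ℕ) (i : Fin s), DifferentiableAt ℝ (fun θ' => XS θ' n i) θ :=
    fun n i => ((hXSsm n i).differentiable (by norm_num)) θ
  have hDSd : ∀ (n : ℕ) (i : Fin s), DifferentiableAt ℝ (fun θ' => DS θ' γ n i) θ :=
    fun n i => ((hDSsm n i).differentiable (by norm_num)) θ
  have hDld : ∀ n : ℕ, DifferentiableAt ℝ (fun θ' => Dl θ' γ n) θ :=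
    fun n => ((hDsm n).differentiable (by norm_num)) θ
  have hcD : ∀ (n : ℕ) (j : Fin s), DifferentiableAt ℝ (fun θ' => fderiv ℝ f (XS θ' n j)) θ :=
    fun n j => ((hfd.differentiable (by norm_num)) (XS θ n j)).comp θ (hXSd n j)
  -- second derivative of f in matrix form
  have hKd : ∀ (q0 δ0 u : Fin d → ℝ),
      (fderiv ℝ (fderiv ℝ f) q0 u) δ0 = (K q0 δ0).mulVec u := by
    intro q0 δ0 u
    have h2 := hK q0 δ0 u
    have h1 : (fun q => (Jf q).mulVec δ0) = fun q => fderiv ℝ f q δ0 :=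
      funext fun q => (hJf q δ0).symm
    rw [h1, fderiv_clm_apply ((hfd.differentiable (by norm_num)) q0) (differentiableAt_const δ0)] at h2
    simpa using h2
  -- derivative of the stage values of the variational system
  have hcval : ∀ (n : ℕ) (j : Fin s) (v : Fin d → ℝ),
      fderiv ℝ (fun θ' => fderiv ℝ f (XS θ' n j)) θ v
        = fderiv ℝ (fderiv ℝ f) (XS θ n j) (DS θ v n j) := by
    intro n j v
    have h1 := fderiv_comp (𝕜 := ℝ) θ ((hfd.differentiable (by norm_num)) (XS θ n j)) (hXSd n j)
    rw [show (fun θ' => fderiv ℝ f (XS θ' n j))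
        = (fderiv ℝ f) ∘ (fun θ' => XS θ' n j) from rfl, h1]
    simp only [ContinuousLinearMap.coe_comp', Function.comp_apply, hvarS θ v n j]
  have hGdiff : ∀ (n : ℕ) (j : Fin s),
      DifferentiableAt ℝ (fun θ' => (Jf (XS θ' n j)).mulVec (DS θ' γ n j)) θ := by
    intro n j
    have h1 : (fun θ' => (Jf (XS θ' n j)).mulVec (DS θ' γ n j))
        = fun θ' => (fderiv ℝ f (XS θ' n j)) (DS θ' γ n j) :=
      funext fun θ' => (hJf (XS θ' n j) (DS θ' γ n j)).symm
    rw [h1]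
    exact (hcD n j).clm_apply (hDSd n j)
  have hGval : ∀ (n : ℕ) (j : Fin s) (v : Fin d → ℝ),
      fderiv ℝ (fun θ' => (Jf (XS θ' n j)).mulVec (DS θ' γ n j)) θ v
        = (K (XS θ n j) (DS θ γ n j)).mulVec (DS θ v n j)
          + (Jf (XS θ n j)).mulVec (fderiv ℝ (fun θ' => DS θ' γ n j) θ v) := by
    intro n j v
    have h1 : (fun θ' => (Jf (XS θ' n j)).mulVec (DS θ' γ n j))
        = fun θ' => (fderiv ℝ f (XS θ' n j)) (DS θ' γ n j) :=
      funext fun θ' => (hJf (XS θ' n j) (DS θ' γ n j)).symm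
    rw [h1, fderiv_clm_apply (hcD n j) (hDSd n j)]
    simp only [ContinuousLinearMap.add_apply, ContinuousLinearMap.coe_comp',
      Function.comp_apply, ContinuousLinearMap.flip_apply]
    rw [hcval n j v, hKd, hJf, add_comm]
  -- the second-variation (ε) recursions, obtained by differentiating in θ
  have hεS : ∀ (n : ℕ) (i : Fin s) (v : Fin d → ℝ),
      fderiv ℝ (fun θ' => DS θ' γ n i) θ v
        = fderiv ℝ (fun θ' => Dl θ' γ n) θ v
          + h • ∑ j, a i j • ((K (XS θ n j) (DS θ γ n j)).mulVec (DS θ v n j)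
              + (Jf (XS θ n j)).mulVec (fderiv ℝ (fun θ' => DS θ' γ n j) θ v)) := by
    intro n i v
    have hfun : (fun θ' => DS θ' γ n i)
        = fun θ' => Dl θ' γ n
            + h • ∑ j, a i j • (Jf (XS θ' n j)).mulVec (DS θ' γ n j) :=
      funext fun θ' => hDS θ' γ n i
    have hR : HasFDerivAt (fun θ' => Dl θ' γ n
          + h • ∑ j, a i j • (Jf (XS θ' n j)).mulVec (DS θ' γ n j))
        (fderiv ℝ (fun θ' => Dl θ' γ n) θ
          + h • ∑ j, a i j •
              fderiv ℝ (fun θ' => (Jf (XS θ' n j)).mulVec (DS θ' γ n j)) θ) θ :=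
      ((hDld n).hasFDerivAt).add
        ((HasFDerivAt.fun_sum fun j _ =>
          ((hGdiff n j).hasFDerivAt.fun_const_smul (a i j))).fun_const_smul h)
    rw [hfun, hR.fderiv]
    simp only [ContinuousLinearMap.add_apply, ContinuousLinearMap.smul_apply,
      ContinuousLinearMap.sum_apply, hGval]
  have hεstep : ∀ (n : ℕ) (v : Fin d → ℝ),
      fderiv ℝ (fun θ' => Dl θ' γ (n + 1)) θ v
        = fderiv ℝ (fun θ' => Dl θ' γ n) θ v
          + h • ∑ i, b i • ((K (XS θ n i) (DS θ γ n i)).mulVec (DS θ v n i)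
              + (Jf (XS θ n i)).mulVec (fderiv ℝ (fun θ' => DS θ' γ n i) θ v)) := by
    intro n v
    have hfun : (fun θ' => Dl θ' γ (n + 1))
        = fun θ' => Dl θ' γ n
            + h • ∑ i, b i • (Jf (XS θ' n i)).mulVec (DS θ' γ n i) :=
      funext fun θ' => hDstep θ' γ n
    have hR : HasFDerivAt (fun θ' => Dl θ' γ n
          + h • ∑ i, b i • (Jf (XS θ' n i)).mulVec (DS θ' γ n i))
        (fderiv ℝ (fun θ' => Dl θ' γ n) θ
          + h • ∑ i, b i •
              fderiv ℝ (fun θ' => (Jf (XS θ' n i)).mulVec (DS θ' γ n i)) θ) θ :=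
      ((hDld n).hasFDerivAt).add
        ((HasFDerivAt.fun_sum fun i _ =>
          ((hGdiff n i).hasFDerivAt.fun_const_smul (b i))).fun_const_smul h)
    rw [hfun, hR.fderiv]
    simp only [ContinuousLinearMap.add_apply, ContinuousLinearMap.smul_apply,
      ContinuousLinearMap.sum_apply, hGval]
  have hε0 : ∀ v : Fin d → ℝ, fderiv ℝ (fun θ' => Dl θ' γ 0) θ v = 0 := by
    intro v
    rw [show (fun θ' => Dl θ' γ 0) = fun _ => γ from funext fun θ' => hD0 θ' γ]
    simp
  -- the coefficient compatibility condition
  have hcond : ∀ i j, b i * b j = b i * a i j + b j * A j i := by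
    intro i j
    rw [hA j i]
    field_simp [hb j]
    ring
  -- transpose pairing identity
  have tdot : ∀ (M : Matrix (Fin d) (Fin d) ℝ) (u w : Fin d → ℝ),
      (Mᵀ.mulVec u) ⬝ᵥ w = u ⬝ᵥ M.mulVec w := by
    intro M u w
    rw [Matrix.mulVec_transpose, ← Matrix.dotProduct_mulVec]
  -- first-order invariant
  have inv2 : ∀ (v : Fin d → ℝ) (n : ℕ), lam n ⬝ᵥ Dl θ v n = lam 0 ⬝ᵥ v := by
    intro v n
    induction n with
    | zero => rw [hD0]
    | succ n ih =>
      rw [← ih]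
      have step := rk_pair hcond (Dl θ v n) (Dl θ v (n + 1)) (lam n) (lam (n + 1))
        (DS θ v n) (LS n)
        (fun i => (Jf (XS θ n i)).mulVec (DS θ v n i))
        (fun i => -((Jf (XS θ n i))ᵀ.mulVec (LS n i)))
        (hDS θ v n) (hDstep θ v n) (hLS n) (hlamstep n)
      rw [step]
      simp [neg_dotProduct, tdot]
  -- second-order invariant
  have inv1 : ∀ (v : Fin d → ℝ) (n : ℕ),
      ξ n ⬝ᵥ Dl θ v n + lam n ⬝ᵥ fderiv ℝ (fun θ' => Dl θ' γ n) θ v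
        = ξ 0 ⬝ᵥ Dl θ v 0 + lam 0 ⬝ᵥ fderiv ℝ (fun θ' => Dl θ' γ 0) θ v := by
    intro v n
    induction n with
    | zero => rfl
    | succ n ih =>
      rw [← ih]
      have stepA := rk_pair hcond (Dl θ v n) (Dl θ v (n + 1)) (ξ n) (ξ (n + 1))
        (DS θ v n) (ΞS n)
        (fun i => (Jf (XS θ n i)).mulVec (DS θ v n i))
        (fun i => -((Jf (XS θ n i))ᵀ.mulVec (ΞS n i)
          + (K (XS θ n i) (DS θ γ n i))ᵀ.mulVec (LS n i)))
        (hDS θ v n) (hDstep θ v n) (hΞS n) (hξstep n)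
      have stepB := rk_pair hcond
        (fderiv ℝ (fun θ' => Dl θ' γ n) θ v)
        (fderiv ℝ (fun θ' => Dl θ' γ (n + 1)) θ v)
        (lam n) (lam (n + 1))
        (fun i => fderiv ℝ (fun θ' => DS θ' γ n i) θ v) (LS n)
        (fun i => (K (XS θ n i) (DS θ γ n i)).mulVec (DS θ v n i)
          + (Jf (XS θ n i)).mulVec (fderiv ℝ (fun θ' => DS θ' γ n i) θ v))
        (fun i => -((Jf (XS θ n i))ᵀ.mulVec (LS n i)))
        (fun i => hεS n i v) (hεstep n v) (hLS n) (hlamstep n)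
      rw [stepA, stepB]
      have hzero : (∑ i, b i *
            ((-((Jf (XS θ n i))ᵀ.mulVec (ΞS n i)
                + (K (XS θ n i) (DS θ γ n i))ᵀ.mulVec (LS n i))) ⬝ᵥ DS θ v n i
              + ΞS n i ⬝ᵥ (Jf (XS θ n i)).mulVec (DS θ v n i)))
          + (∑ i, b i *
            ((-((Jf (XS θ n i))ᵀ.mulVec (LS n i))) ⬝ᵥ
                fderiv ℝ (fun θ' => DS θ' γ n i) θ v
              + LS n i ⬝ᵥ ((K (XS θ n i) (DS θ γ n i)).mulVec (DS θ v n i)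
                  + (Jf (XS θ n i)).mulVec
                      (fderiv ℝ (fun θ' => DS θ' γ n i) θ v)))) = 0 := by
        rw [← Finset.sum_add_distrib]
        apply Finset.sum_eq_zero
        intro i _
        simp only [neg_dotProduct, add_dotProduct, dotProduct_add, tdot]
        ring
      linear_combination h * hzero
  -- chain rule for the composed cost
  have hchain : ∀ (θ' v : Fin d → ℝ),
      fderiv ℝ (fun p => C (X p N)) θ' v = fderiv ℝ C (X θ' N) (Dl θ' v N) := by
    intro θ' v
    have h1 := fderiv_comp (𝕜 := ℝ) θ' ((hC.differentiable (by norm_num)) (X θ' N))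
      (((hXsm N).differentiable (by norm_num)) θ')
    rw [show (fun p => C (X p N)) = C ∘ (fun p => X p N) from rfl, h1]
    simp only [ContinuousLinearMap.coe_comp', Function.comp_apply, hvar θ' v N]
  have part2 : ∀ v : Fin d → ℝ,
      fderiv ℝ (fun θ' => C (X θ' N)) θ v = lam 0 ⬝ᵥ v := by
    intro v
    rw [hchain θ v, hgC, ← hlamN, inv2 v N]
  refine ⟨?_, part2⟩
  -- Hessian-vector identity
  have hCdd : Differentiable ℝ (fderiv ℝ C) := hCd.differentiable (by norm_num)
  have hfin : ∀ v : Fin d → ℝ, v ⬝ᵥ Hθ.mulVec γ = ξ 0 ⬝ᵥ v := by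
    intro v
    rw [← hHθ v γ]
    have hfun : (fun q => fderiv ℝ (fun p => C (X p N)) q γ)
        = fun q => (fderiv ℝ C (X q N)) (Dl q γ N) := funext fun q => hchain q γ
    rw [hfun]
    have hc : DifferentiableAt ℝ (fun q => fderiv ℝ C (X q N)) θ :=
      (hCdd (X θ N)).comp θ (((hXsm N).differentiable (by norm_num)) θ)
    have hu : DifferentiableAt ℝ (fun q => Dl q γ N) θ := hDld N
    rw [fderiv_clm_apply hc hu]
    simp only [ContinuousLinearMap.add_apply, ContinuousLinearMap.coe_comp',
      Function.comp_apply, ContinuousLinearMap.flip_apply]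
    have hcval2 : fderiv ℝ (fun q => fderiv ℝ C (X q N)) θ v
        = fderiv ℝ (fderiv ℝ C) (X θ N) (Dl θ v N) := by
      have h1 := fderiv_comp (𝕜 := ℝ) θ (hCdd (X θ N))
        (((hXsm N).differentiable (by norm_num)) θ)
      rw [show (fun q => fderiv ℝ C (X q N))
          = (fderiv ℝ C) ∘ (fun p => X p N) from rfl, h1]
      simp only [ContinuousLinearMap.coe_comp', Function.comp_apply, hvar θ v N]
    have hsecond : (fderiv ℝ (fderiv ℝ C) (X θ N) (Dl θ v N)) (Dl θ γ N)
        = (Dl θ v N) ⬝ᵥ HCx.mulVec (Dl θ γ N) := by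
      have h2 := hHCx (Dl θ v N) (Dl θ γ N)
      rw [fderiv_clm_apply (hCdd (X θ N)) (differentiableAt_const _)] at h2
      simpa using h2
    rw [hcval2, hsecond, hgC]
    have hinv := inv1 v N
    rw [hD0, hε0 v, dotProduct_zero] at hinv
    rw [← hlamN, ← hξN, dotProduct_comm (Dl θ v N) (ξ N)]
    linear_combination hinv
  have hall : ∀ u : Fin d → ℝ, ξ 0 ⬝ᵥ u = Hθ.mulVec γ ⬝ᵥ u := by
    intro u
    rw [← hfin u, dotProduct_comm]
  exact dotProduct_eq _ _ hall
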